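/- arXiv:1710.08755 — 2 statements merged into one kernel-verified Lean document; each statement's English description precedes it below -/
import Mathlib

section
/- c-BI implies FC: if for every c-bar P and every inductive Q ⊇ P one has Q(⟨⟩), then every pointwise continuous function F : ℕ^ℕ → ℕ is formally continuous. Specifically, given pointwise continuous F, the set P(a) ⟺ (∀ b ∈ ℕ*, F(a⌢0^ω) = F(a⌢b⌢0^ω)) is a c-bar, and the relation a r n ⟺ P(a) ∧ F(a⌢0^ω) = n is a formal topology map inducing F. -/
/-- Initial segment of `α` of length `n`. -/
def seg (α : ℕ → ℕ) (n : ℕ) : List ℕ := List.ofFn (fun i : Fin n => α i)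

/-- `a` followed by the constant zero sequence. -/
def zext (a : List ℕ) : ℕ → ℕ := fun i => a.getD i 0

/-- Upward closure under extension. -/
def extU (U : Set (List ℕ)) : Set (List ℕ) := {a | ∃ b ∈ U, b <+: a}

/-- The cover of formal Baire space, generated by η, ζ, ϝ. -/
inductive Cover : List ℕ → Set (List ℕ) → Prop
  | eta {a : List ℕ} {U : Set (List ℕ)} : a ∈ U → Cover a U
  | zeta {a : List ℕ} {U : Set (List ℕ)} (k : ℕ) : Cover a U → Cover (a ++ [k]) U
  | digamma {a : List ℕ} {U : Set (List ℕ)} : (∀ n, Cover (a ++ [n]) U) → Cover a U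

/-- A spread: a decidable tree where every node has a child. -/
def IsSpread (T : Set (List ℕ)) : Prop :=
  (∀ a, a ∈ T ∨ a ∉ T) ∧ (∀ a b : List ℕ, a <+: b → b ∈ T → a ∈ T) ∧
  (∀ a ∈ T, ∃ n, a ++ [n] ∈ T)

/-- A fan: a finitely branching spread. -/
def IsFan (T : Set (List ℕ)) : Prop :=
  IsSpread T ∧ ∀ a ∈ T, ∃ N, ∀ n, a ++ [n] ∈ T → n ≤ N

/-- `α` is a path in the tree `T`. -/
def IsPath (T : Set (List ℕ)) (α : ℕ → ℕ) : Prop := ∀ n, seg α n ∈ T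

/-- A c-bar: a c-set barring every sequence. -/
def IsCBar (P : Set (List ℕ)) : Prop :=
  (∃ δ : List ℕ → ℕ, ∀ a, a ∈ P ↔ ∀ b, δ a = δ (a ++ b)) ∧
  (∀ α : ℕ → ℕ, ∃ n, seg α n ∈ P)

/-- Pointwise continuity for `F : ℕ^ℕ → ℕ`. -/
def PtwiseCts (F : (ℕ → ℕ) → ℕ) : Prop :=
  ∀ α : ℕ → ℕ, ∃ n, ∀ β : ℕ → ℕ, seg β n = seg α n → F β = F α

/-- An inductive subset of ℕ*. -/
def Inductive (Q : Set (List ℕ)) : Prop := ∀ a, (∀ n, a ++ [n] ∈ Q) → a ∈ Q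

/-- Preimage of a subset of ℕ under a relation r ⊆ ℕ* × ℕ. -/
def rInv (r : List ℕ → ℕ → Prop) (D : Set ℕ) : Set (List ℕ) := {a | ∃ n ∈ D, r a n}

/-- Formal topology map from formal Baire space to formal natural numbers. -/
def IsFTopMap (r : List ℕ → ℕ → Prop) : Prop :=
  Cover [] (rInv r Set.univ) ∧
  ∀ n m : ℕ, ∀ a ∈ extU (rInv r {n}) ∩ extU (rInv r {m}),
    Cover a (rInv r {l | l = n ∧ n = m})

/-- `F` is formally continuous: induced by a formal topology map on points. -/
def FormallyCts (F : (ℕ → ℕ) → ℕ) : Prop :=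
  ∃ r : List ℕ → ℕ → Prop, IsFTopMap r ∧
    ∀ α : ℕ → ℕ, {n | ∃ k, r (seg α k) n} = {F α}

/-- The class of Brouwer-operations. -/
inductive IsBrouwerOp : (List ℕ → ℕ) → Prop
  | const (n : ℕ) : IsBrouwerOp (fun _ => n + 1)
  | sup {γ : List ℕ → ℕ} : γ [] = 0 →
      (∀ n, IsBrouwerOp (fun a => γ (n :: a))) → IsBrouwerOp γ

/-- `bar γ`: minimal sequences on which `γ` is positive. -/
def barOf (γ : List ℕ → ℕ) : Set (List ℕ) :=
  {a | 0 < γ a ∧ ∀ b : List ℕ, b <+: a → b ≠ a → γ b = 0}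

/-- The set presentation `Cov` of formal Baire space. -/
inductive Cov : List ℕ → Set (List ℕ) → Prop
  | single (a : List ℕ) : Cov a {a}
  | union {a : List ℕ} {U : ℕ → Set (List ℕ)} :
      (∀ n, Cov (a ++ [n]) (U n)) → Cov a (⋃ n, U n)

lemma seg_zext_append (α : ℕ → ℕ) (b : List ℕ) {k n : ℕ} (hk : k ≤ n) :
    seg (zext (seg α n ++ b)) k = seg α k := by
  unfold seg zext
  apply List.ext_getElem (by simp)
  intro i h1 h2
  simp only [List.getElem_ofFn]
  have hi : i < n := by simp at h2; omega
  rw [List.getD_append _ _ _ _ (by simp [seg]; omega),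
    List.getD_eq_getElem _ _ (by simp; omega)]
  simp

lemma seg_zext (α : ℕ → ℕ) {k n : ℕ} (hk : k ≤ n) :
    seg (zext (seg α n)) k = seg α k := by
  rw [← List.append_nil (seg α n)]; exact seg_zext_append α [] hk

lemma seg_prefix (α : ℕ → ℕ) {k n : ℕ} (hk : k ≤ n) : seg α k <+: seg α n := by
  induction n, hk using Nat.le_induction with
  | base => exact List.prefix_rfl
  | succ n hn ih =>
    refine ih.trans ⟨[α n], ?_⟩
    rw [seg, seg, List.ofFn_succ']
    simp

lemma Pmono (F : (ℕ → ℕ) → ℕ) {a c : List ℕ}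
    (hP : ∀ b, F (zext a) = F (zext (a ++ b))) (h : a <+: c) :
    ∀ b, F (zext c) = F (zext (c ++ b)) := by
  obtain ⟨e, rfl⟩ := h
  intro b
  rw [← hP e, List.append_assoc, ← hP (e ++ b)]

lemma keyLem (F : (ℕ → ℕ) → ℕ) (hF : PtwiseCts F) (α : ℕ → ℕ) :
    ∃ m, (∀ b, F (zext (seg α m)) = F (zext (seg α m ++ b))) ∧
      F (zext (seg α m)) = F α := by
  obtain ⟨m, hm⟩ := hF α
  have h2 : F (zext (seg α m)) = F α := hm _ (seg_zext α le_rfl)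
  exact ⟨m, fun b => h2.trans (hm _ (seg_zext_append α b le_rfl)).symm, h2⟩

theorem cBI_implies_FC
    (hcBI : ∀ P : Set (List ℕ), IsCBar P →
      ∀ Q : Set (List ℕ), P ⊆ Q → Inductive Q → [] ∈ Q)
    (F : (ℕ → ℕ) → ℕ) (hF : PtwiseCts F) :
    IsCBar {a : List ℕ | ∀ b : List ℕ, F (zext a) = F (zext (a ++ b))} ∧
    IsFTopMap (fun a n =>
      (∀ b : List ℕ, F (zext a) = F (zext (a ++ b))) ∧ F (zext a) = n) ∧
    (∀ α : ℕ → ℕ,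
      {n | ∃ k, (∀ b : List ℕ, F (zext (seg α k)) = F (zext (seg α k ++ b))) ∧
        F (zext (seg α k)) = n} = {F α}) ∧
    FormallyCts F := by
  have hbar : IsCBar {a : List ℕ | ∀ b : List ℕ, F (zext a) = F (zext (a ++ b))} := by
    constructor
    · exact ⟨fun a => F (zext a), fun a => Iff.rfl⟩
    · intro α
      obtain ⟨m, h1, _⟩ := keyLem F hF α
      exact ⟨m, h1⟩
  have hmap : IsFTopMap (fun a n =>
      (∀ b : List ℕ, F (zext a) = F (zext (a ++ b))) ∧ F (zext a) = n) := by
    constructor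
    · refine hcBI _ hbar
        {a | Cover a (rInv (fun a n =>
          (∀ b : List ℕ, F (zext a) = F (zext (a ++ b))) ∧ F (zext a) = n) Set.univ)}
        (fun a ha => Cover.eta ⟨F (zext a), Set.mem_univ _, ha, rfl⟩)
        (fun a h => Cover.digamma h)
    · rintro n m a ⟨⟨b, ⟨n', hn', hPb, hFb⟩, hba⟩, ⟨c, ⟨m', hm', hPc, hFc⟩, hca⟩⟩
      rw [Set.mem_singleton_iff] at hn' hm'
      rw [hn'] at hFb
      rw [hm'] at hFc
      have hnm : n = m := by
        rcases List.prefix_or_prefix_of_prefix hba hca with h | h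
        · obtain ⟨e, rfl⟩ := h
          rw [← hFb, ← hFc, ← hPb e]
        · obtain ⟨e, rfl⟩ := h
          rw [← hFb, ← hFc, ← hPc e]
      have hPa := Pmono F hPb hba
      have hFa : F (zext a) = n := by
        obtain ⟨e, rfl⟩ := hba
        rw [← hPb e, hFb]
      exact Cover.eta ⟨n, ⟨rfl, hnm⟩, hPa, hFa⟩
  have hpts : ∀ α : ℕ → ℕ,
      {n | ∃ k, (∀ b : List ℕ, F (zext (seg α k)) = F (zext (seg α k ++ b))) ∧
        F (zext (seg α k)) = n} = {F α} := by
    intro α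
    ext n
    simp only [Set.mem_setOf_eq, Set.mem_singleton_iff]
    constructor
    · rintro ⟨k, hPk, hFk⟩
      obtain ⟨m, hPm, hFm⟩ := keyLem F hF α
      have hkN : k ≤ max k m := le_max_left _ _
      have hmN : m ≤ max k m := le_max_right _ _
      have h1 : F (zext (seg α (max k m))) = n := by
        obtain ⟨e, he⟩ := seg_prefix α hkN
        rw [← he, ← hPk e, hFk]
      have h2 : F (zext (seg α (max k m))) = F α := by
        obtain ⟨e, he⟩ := seg_prefix α hmN
        rw [← he, ← hPm e, hFm]
      rw [← h1, h2]
    · rintro rfl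
      obtain ⟨m, hPm, hFm⟩ := keyLem F hF α
      exact ⟨m, hPm, hFm⟩
  exact ⟨hbar, hmap, hpts, ⟨_, hmap, hpts⟩⟩
end

section
/- A function F : ℕ^ℕ → ℕ is formally continuous if and only if there exists U ∈ Cov(⟨⟩) such that F is constant on the basic open set of each a ∈ U, i.e., for all a ∈ U and all α, β extending a, F(α) = F(β). -/
lemma seg_length (α : ℕ → ℕ) (n : ℕ) : (seg α n).length = n := by simp [seg]

lemma seg_zext_s17 (a : List ℕ) : seg (zext a) a.length = a := by
  apply List.ext_getElem <;> simp [seg, zext, List.getD_eq_getElem]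

lemma seg_take {α : ℕ → ℕ} {m n : ℕ} (h : m ≤ n) : (seg α n).take m = seg α m := by
  apply List.ext_getElem
  · simp [seg]; omega
  · intro i h1 h2
    simp [seg]

lemma seg_of_prefix {α : ℕ → ℕ} {a b : List ℕ} (h : b <+: a) (ha : seg α a.length = a) :
    seg α b.length = b := by
  have hb := List.prefix_iff_eq_take.mp h
  calc seg α b.length = (seg α a.length).take b.length :=
        (seg_take (by simpa using h.length_le)).symm
    _ = a.take b.length := by rw [ha]
    _ = b := hb.symm

lemma seg_succ (α : ℕ → ℕ) (n : ℕ) : seg α (n + 1) = seg α n ++ [α n] := by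
  apply List.ext_getElem
  · simp [seg]
  · intro i h1 h2
    simp only [seg, List.getElem_ofFn]
    rcases Nat.lt_or_ge i n with h | h
    · rw [List.getElem_append_left (by simpa [seg] using h)]
      simp [seg]
    · have hin : i = n := by
        have : i < n + 1 := by simpa [seg] using h1
        omega
      subst hin
      rw [List.getElem_append_right (by simp [seg])]
      simp [seg]

lemma Cover.mono {a : List ℕ} {U V : Set (List ℕ)} (h : Cover a U) (hUV : U ⊆ V) :
    Cover a V := by
  induction h with
  | eta h => exact Cover.eta (hUV h)
  | zeta k _ ih => exact Cover.zeta k (ih hUV)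
  | digamma _ ih => exact Cover.digamma fun n => ih n hUV

lemma cover_of_mem_prefix {W : Set (List ℕ)} {b a : List ℕ} (hb : b ∈ W) (h : b <+: a) :
    Cover a W := by
  obtain ⟨t, rfl⟩ := h
  induction t using List.reverseRecOn with
  | nil => simpa using Cover.eta hb
  | append_singleton t k ih => rw [← List.append_assoc]; exact Cover.zeta k ih

lemma cov_to_cover {a : List ℕ} {U : Set (List ℕ)} (h : Cov a U) : Cover a U := by
  induction h with
  | single a => exact Cover.eta rfl
  | union _ ih =>
      exact Cover.digamma fun n => (ih n).mono (Set.subset_iUnion _ n)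

lemma extU_extU {V : Set (List ℕ)} : extU (extU V) ⊆ extU V := by
  rintro a ⟨b, ⟨c, hc, hcb⟩, hba⟩
  exact ⟨c, hc, hcb.trans hba⟩

lemma extU_mono {U V : Set (List ℕ)} (h : U ⊆ V) : extU U ⊆ extU V := by
  rintro a ⟨b, hb, hba⟩
  exact ⟨b, h hb, hba⟩

lemma cov_bar {a : List ℕ} {U : Set (List ℕ)} (h : Cov a U) :
    ∀ α : ℕ → ℕ, seg α a.length = a → ∃ k, seg α k ∈ U := by
  induction h with
  | single a => exact fun α hα => ⟨a.length, by rw [hα]; rfl⟩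
  | @union a V _ ih =>
      intro α hα
      have hseg : seg α (a ++ [α a.length]).length = a ++ [α a.length] := by
        simp only [List.length_append, List.length_singleton]
        rw [seg_succ, hα]
      obtain ⟨k, hk⟩ := ih (α a.length) α hseg
      exact ⟨k, Set.mem_iUnion.mpr ⟨_, hk⟩⟩

lemma cov_localize {a : List ℕ} {U : Set (List ℕ)} (h : Cov a U) :
    ∀ b : List ℕ, a <+: b → ∃ U', Cov b U' ∧ U' ⊆ extU U := by
  induction h with
  | single a =>
      intro b hab
      exact ⟨{b}, Cov.single b, fun x hx => ⟨a, rfl, hx ▸ hab⟩⟩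
  | @union a V _ ih =>
      intro b hab
      rcases eq_or_ne a b with rfl | hne
      · choose W hW hWsub using fun n => ih n (a ++ [n]) (List.prefix_refl _)
        exact ⟨⋃ n, W n, Cov.union hW, Set.iUnion_subset fun n =>
          (hWsub n).trans (extU_mono (Set.subset_iUnion _ n))⟩
      · obtain ⟨t, rfl⟩ := hab
        match t with
        | [] => exact absurd (by simp) hne
        | n :: t' =>
            obtain ⟨U', hU', hsub⟩ := ih n (a ++ n :: t') ⟨t', by simp⟩
            exact ⟨U', hU', hsub.trans (extU_mono (Set.subset_iUnion _ n))⟩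

lemma cover_to_cov {a : List ℕ} {V : Set (List ℕ)} (h : Cover a V) :
    ∃ U, Cov a U ∧ U ⊆ extU V := by
  induction h with
  | @eta a _ ha => exact ⟨{a}, Cov.single a, fun x hx => ⟨a, ha, hx ▸ List.prefix_refl _⟩⟩
  | @zeta a _ k _ ih =>
      obtain ⟨U, hU, hsub⟩ := ih
      obtain ⟨U', hU', hsub'⟩ := cov_localize hU (a ++ [k]) ⟨[k], rfl⟩
      exact ⟨U', hU', hsub'.trans ((extU_mono hsub).trans extU_extU)⟩
  | digamma _ ih =>
      choose W hW hWsub using ih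
      exact ⟨⋃ n, W n, Cov.union hW, Set.iUnion_subset hWsub⟩

theorem formallyCts_iff_cov (F : (ℕ → ℕ) → ℕ) :
    FormallyCts F ↔
      ∃ U : Set (List ℕ), Cov [] U ∧
        ∀ a ∈ U, ∀ α β : ℕ → ℕ,
          seg α a.length = a → seg β a.length = a → F α = F β := by
  constructor
  · rintro ⟨r, ⟨hr1, _⟩, hpt⟩
    obtain ⟨U, hU, hsub⟩ := cover_to_cov hr1
    refine ⟨U, hU, ?_⟩
    intro a ha α β hα hβ
    obtain ⟨b, ⟨n, -, hbn⟩, hba⟩ := hsub ha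
    have hstar : ∀ γ : ℕ → ℕ, seg γ a.length = a → F γ = n := by
      intro γ hγ
      have : n ∈ {m | ∃ k, r (seg γ k) m} :=
        ⟨b.length, by rw [seg_of_prefix hba hγ]; exact hbn⟩
      rw [hpt γ] at this
      exact this.symm
    rw [hstar α hα, hstar β hβ]
  · rintro ⟨U, hU, hconst⟩
    refine ⟨fun a n => a ∈ U ∧ F (zext a) = n, ⟨?_, ?_⟩, ?_⟩
    · refine (cov_to_cover hU).mono ?_
      intro a ha
      exact ⟨F (zext a), trivial, ha, rfl⟩
    · rintro n m a ⟨⟨b, ⟨n', hn', hbU, hbv⟩, hba⟩, ⟨c, ⟨m', hm', hcU, hcv⟩, hca⟩⟩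
      rw [Set.mem_singleton_iff] at hn' hm'
      rw [hn'] at hbv; rw [hm'] at hcv
      have hnm : n = m := by
        rcases List.prefix_or_prefix_of_prefix hba hca with hbc | hcb
        · rw [← hbv, ← hcv]
          exact hconst b hbU (zext b) (zext c) (seg_zext_s17 b) (seg_of_prefix hbc (seg_zext_s17 c))
        · rw [← hbv, ← hcv]
          exact (hconst c hcU (zext c) (zext b) (seg_zext_s17 c) (seg_of_prefix hcb (seg_zext_s17 b))).symm
      refine cover_of_mem_prefix ?_ hba
      exact ⟨n, ⟨rfl, hnm⟩, hbU, hbv⟩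
    · intro α
      ext n
      simp only [Set.mem_setOf_eq, Set.mem_singleton_iff]
      have hval : ∀ k, seg α k ∈ U → F α = F (zext (seg α k)) := by
        intro k hk
        exact hconst (seg α k) hk α (zext (seg α k))
          (by rw [seg_length]) (seg_zext_s17 (seg α k))
      constructor
      · rintro ⟨k, hk, hv⟩
        rw [← hv, ← hval k hk]
      · rintro rfl
        obtain ⟨k, hk⟩ := cov_bar hU α (by simp [seg])
        exact ⟨k, hk, (hval k hk).symm⟩
end
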